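/- If (A, <_A) is ℵ₁-saturated and a < b are two elements of M = ω × A (lexicographic order) lying in the same fiber {n} × A, then the open interval (a, b) of M has uncountable cofinality, while M itself has cofinality ℵ₀; hence no order isomorphism maps M onto (a, b). -/

import Mathlib

/-- If `A` is `ℵ₁`-saturated and `a < b` lie in the same fiber of `M = ω × A` (lex),
then `(a, b)` has uncountable cofinality while `M` has cofinality `ℵ₀`; hence no
order isomorphism maps `M` onto `(a, b)`. -/
theorem stmt_16 (A : Type*) [LinearOrder A] [DenselyOrdered A] [NoMinOrder A] [NoMaxOrder A]
    (hsat : ∀ S T : Set A, S.Countable → T.Countable →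
      (∀ s ∈ S, ∀ t ∈ T, s < t) →
      ∃ a : A, (∀ s ∈ S, s < a) ∧ (∀ t ∈ T, a < t))
    (a b : Lex (ℕ × A)) (hfib : (ofLex a).1 = (ofLex b).1) (hab : a < b) :
    (¬ ∃ C : Set (Set.Ioo a b), C.Countable ∧ ∀ q : Set.Ioo a b, ∃ c ∈ C, q ≤ c) ∧
    (∃ S : Set (Lex (ℕ × A)), S.Countable ∧ ∀ x : Lex (ℕ × A), ∃ s ∈ S, x ≤ s) ∧
    ¬ Nonempty (Lex (ℕ × A) ≃o Set.Ioo a b) := by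
  have ha2b2 : (ofLex a).2 < (ofLex b).2 := by
    have h := hab
    rw [← toLex_ofLex a, ← toLex_ofLex b, Prod.Lex.lt_iff] at h
    rcases h with h | ⟨_, h⟩
    · exact absurd hfib h.ne
    · exact h
  -- fact about elements of Ioo a b
  have hmem : ∀ x : Lex (ℕ × A), x ∈ Set.Ioo a b →
      (ofLex x).1 = (ofLex a).1 ∧ (ofLex a).2 < (ofLex x).2 ∧ (ofLex x).2 < (ofLex b).2 := by
    intro x hx
    obtain ⟨h1, h2⟩ := hx
    rw [← toLex_ofLex a, ← toLex_ofLex x, Prod.Lex.lt_iff] at h1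
    rw [← toLex_ofLex x, ← toLex_ofLex b, Prod.Lex.lt_iff] at h2
    rcases h1 with h1 | ⟨he1, h1⟩ <;> rcases h2 with h2 | ⟨he2, h2⟩
    · simp only [ofLex_toLex] at *; omega
    · simp only [ofLex_toLex] at *; omega
    · simp only [ofLex_toLex] at *; omega
    · exact ⟨he1.symm, h1, h2⟩
  have part1 : ¬ ∃ C : Set (Set.Ioo a b), C.Countable ∧ ∀ q : Set.Ioo a b, ∃ c ∈ C, q ≤ c := by
    rintro ⟨C, hCc, hCcof⟩
    set S : Set A := insert (ofLex a).2 ((fun c : Set.Ioo a b => (ofLex (c : Lex (ℕ × A))).2) '' C) with hS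
    obtain ⟨m, hm1, hm2⟩ := hsat S {(ofLex b).2} (hCc.image _ |>.insert _) (Set.countable_singleton _)
      (by
        rintro s hs t ht
        rcases ht with rfl
        rcases hs with rfl | ⟨c, hc, rfl⟩
        · exact ha2b2
        · exact (hmem _ c.2).2.2)
    have hm2' : m < (ofLex b).2 := hm2 _ rfl
    have ham : (ofLex a).2 < m := hm1 _ (Set.mem_insert _ _)
    have hxmem : toLex ((ofLex a).1, m) ∈ Set.Ioo a b := by
      constructor
      · rw [← toLex_ofLex a, Prod.Lex.lt_iff]
        exact Or.inr ⟨rfl, ham⟩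
      · rw [← toLex_ofLex b, Prod.Lex.lt_iff]
        exact Or.inr ⟨hfib, hm2'⟩
    obtain ⟨c, hcC, hle⟩ := hCcof ⟨_, hxmem⟩
    have hclt : (c : Lex (ℕ × A)) < toLex ((ofLex a).1, m) := by
      rw [← toLex_ofLex (c : Lex (ℕ × A)), Prod.Lex.lt_iff]
      refine Or.inr ⟨(hmem _ c.2).1, ?_⟩
      exact hm1 _ (Set.mem_insert_of_mem _ ⟨c, hcC, rfl⟩)
    exact absurd (lt_of_le_of_lt hle hclt) (lt_irrefl _)
  have part2 : ∃ S : Set (Lex (ℕ × A)), S.Countable ∧ ∀ x : Lex (ℕ × A), ∃ s ∈ S, x ≤ s := by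
    refine ⟨Set.range (fun k : ℕ => toLex (k, (ofLex a).2)), Set.countable_range _, ?_⟩
    intro x
    refine ⟨toLex ((ofLex x).1 + 1, (ofLex a).2), ⟨(ofLex x).1 + 1, rfl⟩, ?_⟩
    rw [← toLex_ofLex x, Prod.Lex.le_iff]
    exact Or.inl (Nat.lt_succ_self _)
  refine ⟨part1, part2, ?_⟩
  rintro ⟨f⟩
  obtain ⟨S, hSc, hScof⟩ := part2
  refine part1 ⟨(⇑f) '' S, hSc.image _, ?_⟩
  intro q
  obtain ⟨s, hsS, hle⟩ := hScof (f.symm q)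
  refine ⟨f s, ⟨s, hsS, rfl⟩, ?_⟩
  have := f.monotone hle
  rwa [OrderIso.apply_symm_apply] at this
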